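/- arXiv:2605.10805 — 4 statements merged into one kernel-verified Lean document; each statement's English description precedes it below -/
import Mathlib

section
/- Let n ≥ 1, let ρ_n be a probability mass function on Fin n with ρ_n(i) > 0 for all i, let f : Fin n → ℝ, and let δ > 0. Then the minimum of ρ̃ ↦ ∑_i ρ̃(i) f(i) over the KL uncertainty set U(ρ_n, δ) is attained; moreover, if ρ̃* is a minimizer such that ρ̃*(i) > 0 for all i, the KL constraint is active at ρ̃* (i.e. ∑_i ρ̃*(i) log(ρ̃*(i)/ρ_n(i)) = δ), and f is not constant on Fin n, then there exist τ > 0 and s ∈ ℝ such that ρ̃*(i) = ρ_n(i) · exp((s − f(i))/τ) for every i, and this s satisfies s ≤ ∑_i ρ_n(i) f(i). -/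
open Finset Filter Topology

lemma kl_cont (n : ℕ) (ρn : Fin n → ℝ) (hρ : ∀ i, 0 < ρn i) :
    Continuous (fun ρ : Fin n → ℝ => ∑ i, ρ i * Real.log (ρ i / ρn i)) := by
  have key : ∀ (c : ℝ), 0 < c → (fun x : ℝ => x * Real.log (x / c))
      = fun x => x * Real.log x - x * Real.log c := by
    intro c hc; funext x
    rcases eq_or_ne x 0 with h | h
    · simp [h]
    · rw [Real.log_div h hc.ne']; ring
  apply continuous_finset_sum
  intro i _
  have : (fun ρ : Fin n → ℝ => ρ i * Real.log (ρ i / ρn i))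
      = (fun x : ℝ => x * Real.log x - x * Real.log (ρn i)) ∘ (fun ρ => ρ i) := by
    funext ρ; simp [← key _ (hρ i)]
  rw [this]
  exact (Real.continuous_mul_log.sub (continuous_id.mul continuous_const)).comp (continuous_apply i)

lemma exists_min (n : ℕ) (ρn : Fin n → ℝ)
    (hρ_pos : ∀ i, 0 < ρn i) (hρ_sum : ∑ i, ρn i = 1)
    (f : Fin n → ℝ) (δ : ℝ) (hδ : 0 < δ) :
    ∃ ρmin : Fin n → ℝ,
        ((∀ i, 0 ≤ ρmin i) ∧ (∑ i, ρmin i = 1) ∧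
          ∑ i, ρmin i * Real.log (ρmin i / ρn i) ≤ δ) ∧
        (∀ ρ' : Fin n → ℝ,
          (∀ i, 0 ≤ ρ' i) → (∑ i, ρ' i = 1) →
          (∑ i, ρ' i * Real.log (ρ' i / ρn i) ≤ δ) →
          ∑ i, ρmin i * f i ≤ ∑ i, ρ' i * f i) := by
  set S : Set (Fin n → ℝ) := {ρ | (∀ i, 0 ≤ ρ i) ∧ (∑ i, ρ i = 1) ∧
    ∑ i, ρ i * Real.log (ρ i / ρn i) ≤ δ} with hS
  have hne : ρn ∈ S := by
    refine ⟨fun i => (hρ_pos i).le, hρ_sum, ?_⟩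
    simp only [div_self (hρ_pos _).ne', Real.log_one, mul_zero, sum_const_zero]
    exact hδ.le
  have hSeq : S = (⋂ i, {ρ : Fin n → ℝ | 0 ≤ ρ i}) ∩
      ({ρ : Fin n → ℝ | ∑ i, ρ i = 1} ∩
       {ρ : Fin n → ℝ | ∑ i, ρ i * Real.log (ρ i / ρn i) ≤ δ}) := by
    ext ρ; simp [hS, Set.mem_iInter]
  have hclosed : IsClosed S := by
    rw [hSeq]
    apply IsClosed.inter
    · exact isClosed_iInter (fun i => isClosed_le continuous_const (continuous_apply i))
    apply IsClosed.inter
    · exact isClosed_eq (continuous_finset_sum _ (fun i _ => continuous_apply i)) continuous_const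
    · exact isClosed_le (kl_cont n ρn hρ_pos) continuous_const
  have hbdd : Bornology.IsBounded S := by
    rw [Metric.isBounded_iff_subset_closedBall 0]
    refine ⟨1, fun ρ hρ => ?_⟩
    obtain ⟨h0, h1, _⟩ := hρ
    rw [Metric.mem_closedBall, dist_zero_right]
    rw [pi_norm_le_iff_of_nonneg zero_le_one]
    intro i
    rw [Real.norm_eq_abs, abs_of_nonneg (h0 i)]
    calc ρ i ≤ ∑ j, ρ j := Finset.single_le_sum (fun j _ => h0 j) (mem_univ i)
    _ = 1 := h1
  have hcpt : IsCompact S := Metric.isCompact_iff_isClosed_bounded.2 ⟨hclosed, hbdd⟩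
  have hcont : ContinuousOn (fun ρ : Fin n → ℝ => ∑ i, ρ i * f i) S :=
    (continuous_finset_sum _ (fun i _ => (continuous_apply i).mul continuous_const)).continuousOn
  obtain ⟨ρmin, hmem, hmin⟩ := hcpt.exists_isMinOn ⟨ρn, hne⟩ hcont
  exact ⟨ρmin, hmem, fun ρ' h1 h2 h3 => hmin ⟨h1, h2, h3⟩⟩

lemma kl_deriv (n : ℕ) (ρn ρs d : Fin n → ℝ) (hρn : ∀ i, 0 < ρn i) (hρs : ∀ i, 0 < ρs i) :
    HasDerivAt (fun t => ∑ i, (ρs i + t * d i) * Real.log ((ρs i + t * d i) / ρn i))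
      (∑ i, d i * (Real.log (ρs i / ρn i) + 1)) 0 := by
  apply HasDerivAt.fun_sum
  intro i _
  have hu : HasDerivAt (fun t : ℝ => ρs i + t * d i) (d i) 0 := by
    simpa using ((hasDerivAt_id (0:ℝ)).mul_const (d i)).const_add (ρs i)
  have hdiv : HasDerivAt (fun t : ℝ => (ρs i + t * d i) / ρn i) (d i / ρn i) 0 :=
    hu.div_const _
  have hne : (ρs i + 0 * d i) / ρn i ≠ 0 := by
    simp only [zero_mul, add_zero]
    exact (div_pos (hρs i) (hρn i)).ne'
  have hlog := hdiv.log hne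
  have := hu.fun_mul hlog
  simp only [zero_mul, add_zero] at this
  convert this using 1
  · rfl
  field_simp [(hρn i).ne', (hρs i).ne']


lemma feasible_dir (n : ℕ) (ρn ρs f d : Fin n → ℝ) (δ : ℝ)
    (hρn : ∀ i, 0 < ρn i) (hρs : ∀ i, 0 < ρs i)
    (hmin : ∀ ρ' : Fin n → ℝ,
          (∀ i, 0 ≤ ρ' i) → (∑ i, ρ' i = 1) →
          (∑ i, ρ' i * Real.log (ρ' i / ρn i) ≤ δ) →
          ∑ i, ρs i * f i ≤ ∑ i, ρ' i * f i)
    (hsum1 : ∑ i, ρs i = 1)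
    (hact : ∑ i, ρs i * Real.log (ρs i / ρn i) = δ)
    (hd0 : ∑ i, d i = 0)
    (hdg : ∑ i, d i * Real.log (ρs i / ρn i) < 0) :
    0 ≤ ∑ i, d i * f i := by
  set φ := fun t => ∑ i, (ρs i + t * d i) * Real.log ((ρs i + t * d i) / ρn i) with hφ
  have hder := kl_deriv n ρn ρs d hρn hρs
  have hL : (∑ i, d i * (Real.log (ρs i / ρn i) + 1)) < 0 := by
    have : (∑ i, d i * (Real.log (ρs i / ρn i) + 1))
        = (∑ i, d i * Real.log (ρs i / ρn i)) + ∑ i, d i := by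
      rw [← Finset.sum_add_distrib]; congr 1; funext i; ring
    rw [this, hd0, add_zero]; exact hdg
  have hslope := hasDerivAt_iff_tendsto_slope.1 hder
  have hev1 : ∀ᶠ t in 𝓝[>] (0:ℝ), slope φ 0 t < 0 := by
    apply Filter.Eventually.filter_mono (nhdsWithin_mono 0 (fun x hx => hx.ne' : Set.Ioi (0:ℝ) ⊆ {0}ᶜ))
    exact hslope.eventually (eventually_lt_nhds hL)
  have hev2 : ∀ᶠ t in 𝓝[>] (0:ℝ), ∀ i, 0 < ρs i + t * d i := by
    apply Filter.Eventually.filter_mono nhdsWithin_le_nhds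
    apply eventually_all.2
    intro i
    have hc : Continuous (fun t : ℝ => ρs i + t * d i) := by continuity
    have := (hc.tendsto 0).eventually (eventually_gt_nhds (by simpa using hρs i))
    simpa using this
  have hev3 : ∀ᶠ t in 𝓝[>] (0:ℝ), (0:ℝ) < t := eventually_mem_nhdsWithin
  obtain ⟨t, h1, h2, ht⟩ := (hev1.and (hev2.and hev3)).exists
  set ρ' := fun i => ρs i + t * d i with hρ'
  have hφ0 : φ 0 = δ := by
    simp only [hφ, zero_mul, add_zero]; exact hact
  have hφt : φ t < δ := by
    have := h1
    rw [slope_def_field] at this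
    have h2' : (φ t - φ 0) / t < 0 := by
      simpa [div_eq_div_iff, sub_zero] using this
    have := (div_neg_iff.1 h2')
    rcases this with ⟨ha, _⟩ | ⟨_, hb⟩
    · linarith [hφ0]
    · linarith [ht]
  have hkey := hmin ρ' (fun i => (h2 i).le)
    (by simp only [hρ', Finset.sum_add_distrib, ← Finset.mul_sum, hsum1, hd0]; ring)
    (le_of_lt hφt)
  have : ∑ i, ρ' i * f i = ∑ i, ρs i * f i + t * ∑ i, d i * f i := by
    simp only [hρ', add_mul, Finset.sum_add_distrib, Finset.mul_sum]; ring_nf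
  rw [this] at hkey
  nlinarith [ht]

lemma part2 (n : ℕ) (ρn : Fin n → ℝ)
    (hρ_pos : ∀ i, 0 < ρn i) (hρ_sum : ∑ i, ρn i = 1)
    (f : Fin n → ℝ) (δ : ℝ) (hδ : 0 < δ)
    (ρs : Fin n → ℝ) (hpos : ∀ i, 0 < ρs i) (hsum1 : ∑ i, ρs i = 1)
    (hkl : ∑ i, ρs i * Real.log (ρs i / ρn i) ≤ δ)
    (hmin : ∀ ρ' : Fin n → ℝ,
          (∀ i, 0 ≤ ρ' i) → (∑ i, ρ' i = 1) →
          (∑ i, ρ' i * Real.log (ρ' i / ρn i) ≤ δ) →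
          ∑ i, ρs i * f i ≤ ∑ i, ρ' i * f i)
    (hact : ∑ i, ρs i * Real.log (ρs i / ρn i) = δ)
    (hnc : ¬ ∃ k : ℝ, ∀ i, f i = k) :
    ∃ τ s : ℝ, 0 < τ ∧
      (∀ i, ρs i = ρn i * Real.exp ((s - f i) / τ)) ∧
      s ≤ ∑ i, ρn i * f i := by
  set g : Fin n → ℝ := fun i => Real.log (ρs i / ρn i) with hg
  -- g is not constant
  have hgnc : ∃ i j, g i < g j := by
    by_contra hcon
    push_neg at hcon
    have hconst : ∀ i j, g i = g j := fun i j => le_antisymm (hcon j i) (hcon i j)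
    -- n ≥ 1
    have hn : 0 < n := by
      by_contra h
      push_neg at h
      interval_cases n
      simp at hρ_sum
    set i0 : Fin n := ⟨0, hn⟩
    have hc : ∀ i, g i = g i0 := fun i => hconst i i0
    have hδ' : g i0 = δ := by
      have : ∑ i, ρs i * g i = ∑ i, ρs i * g i0 := by
        apply Finset.sum_congr rfl; intro i _; rw [hc i]
      rw [this, ← Finset.sum_mul, hsum1, one_mul] at hact
      exact hact
    have hexp : ∀ i, ρs i = ρn i * Real.exp δ := by
      intro i
      have hel : Real.exp (g i) = ρs i / ρn i := Real.exp_log (div_pos (hpos i) (hρ_pos i))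
      rw [hc i, hδ'] at hel
      rw [eq_div_iff (hρ_pos i).ne'] at hel
      linarith
    have : (1:ℝ) = Real.exp δ := by
      rw [← hsum1]
      rw [Finset.sum_congr rfl (fun i _ => hexp i), ← Finset.sum_mul, hρ_sum, one_mul]
    have := Real.exp_pos δ
    nlinarith [Real.add_one_lt_exp hδ.ne', hδ]
  obtain ⟨i0, j0, hij⟩ := hgnc
  set d0 : Fin n → ℝ := fun k => (if k = i0 then 1 else 0) - (if k = j0 then 1 else 0) with hd0def
  have hne : i0 ≠ j0 := fun h => by rw [h] at hij; exact lt_irrefl _ hij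
  have hd0sum : ∑ k, d0 k = 0 := by
    simp [hd0def, Finset.sum_sub_distrib]
  have pair_sum : ∀ h : Fin n → ℝ, ∑ k, d0 k * h k = h i0 - h j0 := by
    intro h
    simp [hd0def, sub_mul, Finset.sum_sub_distrib, Finset.sum_ite_eq']
  have hd0g : ∑ k, d0 k * g k < 0 := by rw [pair_sum]; linarith
  have hd0f : 0 ≤ ∑ k, d0 k * f k :=
    feasible_dir n ρn ρs f d0 δ hρ_pos hpos hmin hsum1 hact hd0sum hd0g
  set a : ℝ := (∑ k, d0 k * f k) / (∑ k, d0 k * g k) with ha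
  have ha0 : a ≤ 0 := div_nonpos_of_nonneg_of_nonpos hd0f hd0g.le
  -- subclaim: tangent directions
  have H : ∀ d : Fin n → ℝ, (∑ k, d k = 0) → (∑ k, d k * g k = 0) → 0 ≤ ∑ k, d k * f k := by
    intro d hds hdg
    have hstep : ∀ ε : ℝ, 0 < ε → 0 ≤ ∑ k, d k * f k + ε * ∑ k, d0 k * f k := by
      intro ε hε
      have h1 : ∑ k, (d k + ε * d0 k) = 0 := by
        rw [Finset.sum_add_distrib, hds, ← Finset.mul_sum, hd0sum]; ring
      have h2 : ∑ k, (d k + ε * d0 k) * g k < 0 := by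
        have : ∑ k, (d k + ε * d0 k) * g k
            = ∑ k, d k * g k + ε * ∑ k, d0 k * g k := by
          rw [Finset.mul_sum, ← Finset.sum_add_distrib]
          apply Finset.sum_congr rfl; intro k _; ring
        rw [this, hdg, zero_add]
        exact mul_neg_of_pos_of_neg hε hd0g
      have h3 : 0 ≤ ∑ k, (d k + ε * d0 k) * f k :=
        feasible_dir n ρn ρs f (fun k => d k + ε * d0 k) δ hρ_pos hpos hmin hsum1 hact h1 h2
      have heq : ∑ k, (d k + ε * d0 k) * f k = ∑ k, d k * f k + ε * ∑ k, d0 k * f k := by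
        rw [Finset.mul_sum, ← Finset.sum_add_distrib]
        apply Finset.sum_congr rfl; intro k _; ring
      rw [heq] at h3
      exact h3
    by_contra hno
    push_neg at hno
    rcases eq_or_lt_of_le hd0f with hC | hC
    · have := hstep 1 one_pos
      rw [← hC] at this
      linarith
    · have h := hstep ((-∑ k, d k * f k) / (2 * ∑ k, d0 k * f k))
        (div_pos (by linarith) (by linarith))
      have heq : ((-∑ k, d k * f k) / (2 * ∑ k, d0 k * f k)) * ∑ k, d0 k * f k
          = (-∑ k, d k * f k) / 2 := by
        field_simp
      rw [heq] at h
      linarith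
  have key : ∀ d : Fin n → ℝ, (∑ k, d k = 0) → ∑ k, d k * f k = a * ∑ k, d k * g k := by
    intro d hds
    set c : ℝ := (∑ k, d k * g k) / (∑ k, d0 k * g k) with hc
    set d' : Fin n → ℝ := fun k => d k - c * d0 k with hd'
    have h1 : ∑ k, d' k = 0 := by
      simp only [hd', Finset.sum_sub_distrib, hds, ← Finset.mul_sum, hd0sum]; ring
    have h2 : ∑ k, d' k * g k = 0 := by
      have : ∑ k, d' k * g k = ∑ k, d k * g k - c * ∑ k, d0 k * g k := by
        rw [Finset.mul_sum, ← Finset.sum_sub_distrib]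
        apply Finset.sum_congr rfl; intro k _; simp only [hd']; ring
      rw [this, hc, div_mul_cancel₀ _ hd0g.ne]; ring
    have h3 : ∑ k, d' k * f k = ∑ k, d k * f k - c * ∑ k, d0 k * f k := by
      rw [Finset.mul_sum, ← Finset.sum_sub_distrib]
      apply Finset.sum_congr rfl; intro k _; simp only [hd']; ring
    have h1' : ∑ k, -d' k = 0 := by rw [Finset.sum_neg_distrib, h1, neg_zero]
    have h2' : ∑ k, -d' k * g k = 0 := by
      simp only [neg_mul]; rw [Finset.sum_neg_distrib, h2, neg_zero]
    have hp := H d' h1 h2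
    have hq : 0 ≤ ∑ k, -d' k * f k := H (fun k => -d' k) h1' h2'
    have h4 : ∑ k, -d' k * f k = -∑ k, d' k * f k := by
      simp only [neg_mul]; rw [Finset.sum_neg_distrib]
    rw [h4] at hq
    have h5 : ∑ k, d' k * f k = 0 := le_antisymm (by linarith) hp
    rw [h3] at h5
    have : ∑ k, d k * f k = c * ∑ k, d0 k * f k := by linarith
    rw [this, hc, ha]
    field_simp
  -- pairwise relation: f i - a * g i constant
  set b : ℝ := f i0 - a * g i0 with hb
  have hconst : ∀ i, f i = a * g i + b := by
    intro i
    have hdi : ∑ k, ((fun k => (if k = i then 1 else 0) - (if k = i0 then (1:ℝ) else 0)) k) = 0 := by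
      simp [Finset.sum_sub_distrib]
    have := key (fun k => (if k = i then 1 else 0) - (if k = i0 then (1:ℝ) else 0)) hdi
    have e1 : ∑ k, ((if k = i then (1:ℝ) else 0) - (if k = i0 then 1 else 0)) * f k = f i - f i0 := by
      simp [sub_mul, Finset.sum_sub_distrib, Finset.sum_ite_eq']
    have e2 : ∑ k, ((if k = i then (1:ℝ) else 0) - (if k = i0 then 1 else 0)) * g k = g i - g i0 := by
      simp [sub_mul, Finset.sum_sub_distrib, Finset.sum_ite_eq']
    rw [e1, e2] at this
    rw [hb]; linarith [this]
  have hane : a ≠ 0 := by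
    intro h
    exact hnc ⟨b, fun i => by rw [hconst i, h, zero_mul, zero_add]⟩
  have haneg : a < 0 := lt_of_le_of_ne ha0 hane
  refine ⟨-a, b, by linarith, ?_, ?_⟩
  · intro i
    have hgi : g i = (b - f i) / (-a) := by
      have h := hconst i
      rw [eq_div_iff (by linarith : -a ≠ 0)]
      linarith [h]
    have hel : Real.exp (g i) = ρs i / ρn i := Real.exp_log (div_pos (hpos i) (hρ_pos i))
    rw [hgi] at hel
    rw [hel, mul_div_assoc', mul_comm, mul_div_assoc, div_self (hρ_pos i).ne', mul_one]
  · -- b ≤ ∑ ρn i * f i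
    have hgle : ∑ i, ρn i * g i ≤ 0 := by
      have : ∀ i, ρn i * g i ≤ ρs i - ρn i := by
        intro i
        have hl := Real.log_le_sub_one_of_pos (div_pos (hpos i) (hρ_pos i))
        have := mul_le_mul_of_nonneg_left hl (hρ_pos i).le
        calc ρn i * g i ≤ ρn i * (ρs i / ρn i - 1) := this
        _ = ρs i - ρn i := by
          rw [mul_comm, sub_mul, div_mul_cancel₀ _ (hρ_pos i).ne', one_mul]
      calc ∑ i, ρn i * g i ≤ ∑ i, (ρs i - ρn i) := Finset.sum_le_sum (fun i _ => this i)
      _ = 0 := by rw [Finset.sum_sub_distrib, hsum1, hρ_sum]; ring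
    have : ∑ i, ρn i * f i = a * ∑ i, ρn i * g i + b := by
      have e : ∀ i, ρn i * f i = a * (ρn i * g i) + b * ρn i := by
        intro i; rw [hconst i]; ring
      rw [Finset.sum_congr rfl (fun i _ => e i), Finset.sum_add_distrib,
        ← Finset.mul_sum, ← Finset.mul_sum, hρ_sum, mul_one]
    rw [this]
    nlinarith [mul_nonneg (neg_nonneg.2 haneg.le) (neg_nonneg.2 hgle)]

/-- existence of a minimizer of the linear objective over the KL
uncertainty set, and the exponential-tilting form of any interior minimizer at
which the KL constraint is active (for non-constant `f`), with baseline bound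
`s ≤ ∑ i, ρn i * f i`. Here `ρ̃ i * log (ρ̃ i / ρn i)` is `0` when `ρ̃ i = 0`
(recall `Real.log 0 = 0`). -/
theorem kl_uncertainty_min (n : ℕ) (hn : 1 ≤ n) (ρn : Fin n → ℝ)
    (hρ_pos : ∀ i, 0 < ρn i) (hρ_sum : ∑ i, ρn i = 1)
    (f : Fin n → ℝ) (δ : ℝ) (hδ : 0 < δ) :
    ((∃ ρmin : Fin n → ℝ,
        ((∀ i, 0 ≤ ρmin i) ∧ (∑ i, ρmin i = 1) ∧
          ∑ i, ρmin i * Real.log (ρmin i / ρn i) ≤ δ) ∧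
        (∀ ρ' : Fin n → ℝ,
          (∀ i, 0 ≤ ρ' i) → (∑ i, ρ' i = 1) →
          (∑ i, ρ' i * Real.log (ρ' i / ρn i) ≤ δ) →
          ∑ i, ρmin i * f i ≤ ∑ i, ρ' i * f i)) ∧
      (∀ ρstar : Fin n → ℝ,
        (∀ i, 0 < ρstar i) → (∑ i, ρstar i = 1) →
        (∑ i, ρstar i * Real.log (ρstar i / ρn i) ≤ δ) →
        (∀ ρ' : Fin n → ℝ,
          (∀ i, 0 ≤ ρ' i) → (∑ i, ρ' i = 1) →
          (∑ i, ρ' i * Real.log (ρ' i / ρn i) ≤ δ) →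
          ∑ i, ρstar i * f i ≤ ∑ i, ρ' i * f i) →
        (∑ i, ρstar i * Real.log (ρstar i / ρn i) = δ) →
        (¬ ∃ k : ℝ, ∀ i, f i = k) →
        ∃ τ s : ℝ, 0 < τ ∧
          (∀ i, ρstar i = ρn i * Real.exp ((s - f i) / τ)) ∧
          s ≤ ∑ i, ρn i * f i)) := by
  refine ⟨exists_min n ρn hρ_pos hρ_sum f δ hδ, ?_⟩
  intro ρstar h1 h2 h3 h4 h5 h6
  exact part2 n ρn hρ_pos hρ_sum f δ hδ ρstar h1 h2 h3 h4 h5 h6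
end

section
/- Let n ≥ 1, let ρ_n be a probability mass function on Fin n with ρ_n(i) > 0 for all i, let f : Fin n → ℝ, and let δ > 0. Then the maximum of ρ̃ ↦ ∑_i ρ̃(i) f(i) over the KL uncertainty set U(ρ_n, δ) is attained; moreover, if ρ̃* is a maximizer such that ρ̃*(i) > 0 for all i, the KL constraint is active at ρ̃* (i.e. ∑_i ρ̃*(i) log(ρ̃*(i)/ρ_n(i)) = δ), and f is not constant on Fin n, then there exist τ > 0 and s̄ ∈ ℝ such that ρ̃*(i) = ρ_n(i) · exp((f(i) − s̄)/τ) for every i, and this s̄ satisfies s̄ ≥ ∑_i ρ_n(i) f(i). -/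
open Finset

private lemma kl_mul_log_div_eq {c : ℝ} (hc : c ≠ 0) (x : ℝ) :
    x * Real.log (x / c) = x * Real.log x - x * Real.log c := by
  rcases eq_or_ne x 0 with h | h
  · simp [h]
  · rw [Real.log_div h hc, mul_sub]

/-- existence of a maximizer of the linear objective over the KL
uncertainty set, and the exponential-tilting form of any interior maximizer at
which the KL constraint is active (for non-constant `f`), with baseline bound
`s̄ ≥ ∑ i, ρn i * f i`. Here `ρ̃ i * log (ρ̃ i / ρn i)` is `0` when `ρ̃ i = 0`
(recall `Real.log 0 = 0`). -/
theorem kl_uncertainty_max (n : ℕ) (hn : 1 ≤ n) (ρn : Fin n → ℝ)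
    (hρ_pos : ∀ i, 0 < ρn i) (hρ_sum : ∑ i, ρn i = 1)
    (f : Fin n → ℝ) (δ : ℝ) (hδ : 0 < δ) :
    ((∃ ρmax : Fin n → ℝ,
        ((∀ i, 0 ≤ ρmax i) ∧ (∑ i, ρmax i = 1) ∧
          ∑ i, ρmax i * Real.log (ρmax i / ρn i) ≤ δ) ∧
        (∀ ρ' : Fin n → ℝ,
          (∀ i, 0 ≤ ρ' i) → (∑ i, ρ' i = 1) →
          (∑ i, ρ' i * Real.log (ρ' i / ρn i) ≤ δ) →
          ∑ i, ρ' i * f i ≤ ∑ i, ρmax i * f i)) ∧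
      (∀ ρstar : Fin n → ℝ,
        (∀ i, 0 < ρstar i) → (∑ i, ρstar i = 1) →
        (∑ i, ρstar i * Real.log (ρstar i / ρn i) ≤ δ) →
        (∀ ρ' : Fin n → ℝ,
          (∀ i, 0 ≤ ρ' i) → (∑ i, ρ' i = 1) →
          (∑ i, ρ' i * Real.log (ρ' i / ρn i) ≤ δ) →
          ∑ i, ρ' i * f i ≤ ∑ i, ρstar i * f i) →
        (∑ i, ρstar i * Real.log (ρstar i / ρn i) = δ) →
        (¬ ∃ k : ℝ, ∀ i, f i = k) →
        ∃ τ s : ℝ, 0 < τ ∧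
          (∀ i, ρstar i = ρn i * Real.exp ((f i - s) / τ)) ∧
          (∑ i, ρn i * f i) ≤ s)) := by
  have hρ_ne : ∀ i, ρn i ≠ 0 := fun i => (hρ_pos i).ne'
  have hKL : ∀ ρ : Fin n → ℝ,
      ∑ i, ρ i * Real.log (ρ i / ρn i)
        = ∑ i, (ρ i * Real.log (ρ i) - ρ i * Real.log (ρn i)) :=
    fun ρ => Finset.sum_congr rfl fun i _ => kl_mul_log_div_eq (hρ_ne i) (ρ i)
  constructor
  · -- Part 1: existence of a maximizer
    set S : Set (Fin n → ℝ) := {ρ | (∀ i, 0 ≤ ρ i) ∧ (∑ i, ρ i = 1) ∧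
      ∑ i, ρ i * Real.log (ρ i / ρn i) ≤ δ} with hSdef
    have hSne : S.Nonempty := by
      refine ⟨ρn, fun i => (hρ_pos i).le, hρ_sum, ?_⟩
      have h0 : ∑ i, ρn i * Real.log (ρn i / ρn i) = 0 :=
        Finset.sum_eq_zero fun i _ => by
          rw [div_self (hρ_ne i), Real.log_one, mul_zero]
      rw [h0]; exact hδ.le
    have hKcont : Continuous fun ρ : Fin n → ℝ => ∑ i, ρ i * Real.log (ρ i / ρn i) := by
      have heq : (fun ρ : Fin n → ℝ => ∑ i, ρ i * Real.log (ρ i / ρn i))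
          = fun ρ => ∑ i, (ρ i * Real.log (ρ i) - ρ i * Real.log (ρn i)) := funext hKL
      rw [heq]
      exact continuous_finset_sum _ fun i _ =>
        (Real.continuous_mul_log.comp (continuous_apply i)).sub
          ((continuous_apply i).mul continuous_const)
    have hSclosed : IsClosed S := by
      have h1 : IsClosed {ρ : Fin n → ℝ | ∀ i, 0 ≤ ρ i} := by
        have : {ρ : Fin n → ℝ | ∀ i, 0 ≤ ρ i} = ⋂ i, {ρ : Fin n → ℝ | 0 ≤ ρ i} := by
          ext ρ; simp
        rw [this]
        exact isClosed_iInter fun i => isClosed_le continuous_const (continuous_apply i)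
      have h2 : IsClosed {ρ : Fin n → ℝ | ∑ i, ρ i = 1} :=
        isClosed_eq (continuous_finset_sum _ fun i _ => continuous_apply i) continuous_const
      have h3 : IsClosed {ρ : Fin n → ℝ | ∑ i, ρ i * Real.log (ρ i / ρn i) ≤ δ} :=
        isClosed_le hKcont continuous_const
      have : S = {ρ : Fin n → ℝ | ∀ i, 0 ≤ ρ i} ∩
          ({ρ : Fin n → ℝ | ∑ i, ρ i = 1} ∩
            {ρ : Fin n → ℝ | ∑ i, ρ i * Real.log (ρ i / ρn i) ≤ δ}) := by
        ext ρ; simp [hSdef, Set.mem_setOf_eq, and_assoc]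
      rw [this]
      exact h1.inter (h2.inter h3)
    have hSbdd : Bornology.IsBounded S := by
      refine (Metric.isBounded_closedBall (x := (0 : Fin n → ℝ)) (r := 1)).subset ?_
      intro ρ hρ
      rw [Metric.mem_closedBall]
      refine (dist_pi_le_iff zero_le_one).2 fun i => ?_
      have h1 : ρ i ≤ 1 := by
        have := Finset.single_le_sum (fun j _ => hρ.1 j) (Finset.mem_univ i)
        rwa [hρ.2.1] at this
      have h2 : 0 ≤ ρ i := hρ.1 i
      rw [Real.dist_eq, Pi.zero_apply, sub_zero, abs_le]
      constructor <;> linarith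
    have hScompact : IsCompact S := Metric.isCompact_of_isClosed_isBounded hSclosed hSbdd
    have hLcont : ContinuousOn (fun ρ : Fin n → ℝ => ∑ i, ρ i * f i) S :=
      (continuous_finset_sum _ fun i _ => (continuous_apply i).mul continuous_const).continuousOn
    obtain ⟨ρmax, hmem, hmax⟩ := hScompact.exists_isMaxOn hSne hLcont
    exact ⟨ρmax, hmem, fun ρ' h1 h2 h3 => hmax ⟨h1, h2, h3⟩⟩
  · -- Part 2: structure of interior maximizers with active constraint
    intro ρstar hpos hsum hKle hmax hact hnc
    have hρs_ne : ∀ i, ρstar i ≠ 0 := fun i => (hpos i).ne'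
    set ℓ : Fin n → ℝ := fun i => Real.log (ρstar i / ρn i) with hℓ
    have hratio_pos : ∀ i, 0 < ρstar i / ρn i := fun i => div_pos (hpos i) (hρ_pos i)
    set g : Fin n → ℝ := fun i => ℓ i + 1 with hg
    -- linear-combination helpers
    have hlin : ∀ (c1 c2 : ℝ) (u w z : Fin n → ℝ),
        ∑ i, (c1 * u i + c2 * w i) * z i
          = c1 * ∑ i, u i * z i + c2 * ∑ i, w i * z i := by
      intro c1 c2 u w z
      rw [Finset.mul_sum, Finset.mul_sum, ← Finset.sum_add_distrib]
      exact Finset.sum_congr rfl fun i _ => by ring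
    have hlin0 : ∀ (c1 c2 : ℝ) (u w : Fin n → ℝ),
        ∑ i, (c1 * u i + c2 * w i) = c1 * ∑ i, u i + c2 * ∑ i, w i := by
      intro c1 c2 u w
      rw [Finset.mul_sum, Finset.mul_sum, ← Finset.sum_add_distrib]
    set D : Fin n → Fin n → Fin n → ℝ :=
      fun p q k => (if k = p then 1 else 0) - (if k = q then 1 else 0) with hD
    have hsingle : ∀ (p : Fin n) (z : Fin n → ℝ),
        ∑ k, (if k = p then (1:ℝ) else 0) * z k = z p := by
      intro p z
      rw [Finset.sum_congr rfl (fun k _ => ite_mul (k = p) 1 0 (z k))]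
      simp
    have hpair : ∀ (p q : Fin n) (z : Fin n → ℝ),
        ∑ k, D p q k * z k = z p - z q := by
      intro p q z
      simp only [hD, sub_mul]
      rw [Finset.sum_sub_distrib, hsingle, hsingle]
    have hpair0 : ∀ (p q : Fin n), ∑ k, D p q k = 0 := by
      intro p q
      simp [hD, Finset.sum_sub_distrib]
    -- Step A: descent directions
    have stepA : ∀ v : Fin n → ℝ, (∑ i, v i) = 0 → (∑ i, v i * g i) < 0 →
        (∑ i, v i * f i) ≤ 0 := by
      intro v hv0 hvg
      set h : ℝ → ℝ := fun t => ∑ i, ((ρstar i + t * v i) * Real.log (ρstar i + t * v i)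
        - (ρstar i + t * v i) * Real.log (ρn i)) with hhdef
      have hderiv : HasDerivAt h (∑ i, v i * g i) 0 := by
        have hterm : ∀ i ∈ (univ : Finset (Fin n)), HasDerivAt
            (fun t => (ρstar i + t * v i) * Real.log (ρstar i + t * v i)
              - (ρstar i + t * v i) * Real.log (ρn i)) (v i * g i) 0 := by
          intro i _
          have ha : HasDerivAt (fun t : ℝ => ρstar i + t * v i) (v i) 0 := by
            simpa using ((hasDerivAt_id (0:ℝ)).mul_const (v i)).const_add (ρstar i)
          have hne : (ρstar i + (0:ℝ) * v i) ≠ 0 := by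
            simpa using (hpos i).ne'
          have hcomp : HasDerivAt
              (fun t => (ρstar i + t * v i) * Real.log (ρstar i + t * v i))
              ((Real.log (ρstar i) + 1) * v i) 0 := by
            have := (Real.hasDerivAt_mul_log hne).comp 0 ha
            simpa [Function.comp_def] using this
          have hmul : HasDerivAt (fun t => (ρstar i + t * v i) * Real.log (ρn i))
              (v i * Real.log (ρn i)) 0 := ha.mul_const _
          have := hcomp.fun_sub hmul
          convert this using 1
          · rfl
          · rfl
          simp only [hg, hℓ, Real.log_div (hρs_ne i) (hρ_ne i)]
          ring
        rw [hhdef]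
        exact HasDerivAt.fun_sum hterm
      have hslope : Filter.Tendsto (slope h 0) (nhdsWithin 0 (Set.Ioi 0))
          (nhds (∑ i, v i * g i)) := by
        refine (hasDerivAt_iff_tendsto_slope.mp hderiv).mono_left
          (nhdsWithin_mono _ ?_)
        intro x hx
        exact ne_of_gt hx
      have hev1 : ∀ᶠ t in nhdsWithin (0:ℝ) (Set.Ioi 0), slope h 0 t < 0 :=
        hslope.eventually (eventually_lt_nhds hvg)
      have hev2 : ∀ᶠ t in nhdsWithin (0:ℝ) (Set.Ioi 0), ∀ i, 0 < ρstar i + t * v i := by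
        apply Filter.Eventually.filter_mono nhdsWithin_le_nhds
        rw [Filter.eventually_all]
        intro i
        have hc : Continuous fun t : ℝ => ρstar i + t * v i := by continuity
        have htend := hc.tendsto 0
        have h0 : ρstar i + (0:ℝ) * v i = ρstar i := by ring
        rw [h0] at htend
        exact htend.eventually (eventually_gt_nhds (hpos i))
      have hev3 : ∀ᶠ t in nhdsWithin (0:ℝ) (Set.Ioi 0), 0 < t :=
        eventually_mem_nhdsWithin
      obtain ⟨t, ⟨htslope, htall⟩, htpos⟩ := ((hev1.and hev2).and hev3).exists
      have hht : h t < h 0 := by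
        rw [slope_def_field] at htslope
        have ht0 : (0:ℝ) < t - 0 := by simpa using htpos
        rcases div_neg_iff.mp htslope with ⟨h1, h2⟩ | ⟨h1, h2⟩
        · linarith
        · linarith
      -- build the competitor
      set ρ' : Fin n → ℝ := fun i => ρstar i + t * v i with hρ'def
      have hρ'sum : ∑ i, ρ' i = 1 := by
        rw [hρ'def]
        rw [Finset.sum_add_distrib, ← Finset.mul_sum, hv0, hsum]
        ring
      have h0eq : h 0 = δ := by
        rw [hhdef]
        simp only [zero_mul, add_zero]
        rw [← hKL ρstar, hact]
      have hteq : h t = ∑ i, ρ' i * Real.log (ρ' i / ρn i) := (hKL ρ').symm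
      have hfeas : ∑ i, ρ' i * Real.log (ρ' i / ρn i) ≤ δ := by
        rw [← hteq]
        linarith [hht, h0eq.le, h0eq.ge]
      have hle := hmax ρ' (fun i => (htall i).le) hρ'sum hfeas
      have hexp : ∑ i, ρ' i * f i = ∑ i, ρstar i * f i + t * ∑ i, v i * f i := by
        rw [Finset.mul_sum, ← Finset.sum_add_distrib]
        exact Finset.sum_congr rfl fun i _ => by rw [hρ'def]; ring
      rw [hexp] at hle
      nlinarith
    -- ℓ is not constant
    have hℓnc : ∃ a b, ℓ b < ℓ a := by
      by_contra hcon
      push_neg at hcon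
      have hconst : ∀ a b, ℓ a = ℓ b := fun a b => le_antisymm (hcon a b) (hcon b a)
      have i0 : Fin n := ⟨0, hn⟩
      have hc : ∀ i, ρstar i = ρn i * (ρstar i0 / ρn i0) := by
        intro i
        have h1 : ρstar i / ρn i = ρstar i0 / ρn i0 := by
          have e1 : Real.exp (ℓ i) = ρstar i / ρn i := Real.exp_log (hratio_pos i)
          have e2 : Real.exp (ℓ i0) = ρstar i0 / ρn i0 := Real.exp_log (hratio_pos i0)
          rw [← e1, hconst i i0, e2]
        rw [← h1, eq_comm, mul_comm]
        exact div_mul_cancel₀ _ (hρ_ne i)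
      have hcsum : ρstar i0 / ρn i0 = 1 := by
        have : (1:ℝ) = ∑ i, ρn i * (ρstar i0 / ρn i0) := by
          rw [← hsum]
          exact Finset.sum_congr rfl fun i _ => hc i
        rw [← Finset.sum_mul, hρ_sum, one_mul] at this
        exact this.symm
      have heqρ : ∀ i, ρstar i = ρn i := by
        intro i; rw [hc i, hcsum, mul_one]
      have hzero : ∑ i, ρstar i * Real.log (ρstar i / ρn i) = 0 :=
        Finset.sum_eq_zero fun i _ => by
          rw [heqρ i, div_self (hρ_ne i), Real.log_one, mul_zero]
      rw [hact] at hzero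
      linarith
    obtain ⟨a, b, hab⟩ := hℓnc
    have hgab : g b < g a := by simp only [hg]; linarith
    have hgd : (0:ℝ) < g a - g b := by linarith
    -- the basic strictly-decreasing direction w = e_b - e_a
    have hwf : f b - f a ≤ 0 := by
      have h1 : ∑ k, D b a k = 0 := hpair0 b a
      have h2 : ∑ k, D b a k * g k < 0 := by rw [hpair]; linarith
      have := stepA (D b a) h1 h2
      rwa [hpair] at this
    -- Step B: weak inequality version
    have stepB : ∀ v : Fin n → ℝ, (∑ i, v i) = 0 → (∑ i, v i * g i) ≤ 0 →
        (∑ i, v i * f i) ≤ 0 := by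
      intro v hv0 hvg
      have key : ∀ ε : ℝ, 0 < ε → ∑ i, v i * f i ≤ ε * (f a - f b) := by
        intro ε hε
        set v' : Fin n → ℝ := fun k => 1 * v k + ε * D b a k with hv'
        have h1 : ∑ i, v' i = 0 := by
          rw [hv', hlin0, hv0, hpair0]; ring
        have h2 : ∑ i, v' i * g i < 0 := by
          rw [hv', hlin, hpair]
          have : ε * (g b - g a) < 0 := mul_neg_of_pos_of_neg hε (by linarith)
          linarith
        have h3 := stepA v' h1 h2
        rw [hv', hlin, hpair] at h3
        linarith
      rcases le_or_gt (f a - f b) 0 with hC | hC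
      · have := key 1 one_pos
        linarith
      · by_contra hcon
        push_neg at hcon
        set ε := (∑ i, v i * f i) / (2 * (f a - f b)) with hε
        have hεpos : 0 < ε := by positivity
        have := key ε hεpos
        have heq : ε * (f a - f b) = (∑ i, v i * f i) / 2 := by
          rw [hε]; field_simp
        rw [heq] at this
        linarith
    -- Step C: equality version
    have stepC : ∀ v : Fin n → ℝ, (∑ i, v i) = 0 → (∑ i, v i * g i) = 0 →
        (∑ i, v i * f i) = 0 := by
      intro v hv0 hvg
      have h1 := stepB v hv0 hvg.le
      have hneg0 : ∑ i, (fun k => -v k) i = 0 := by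
        simp only []
        rw [Finset.sum_neg_distrib, hv0, neg_zero]
      have hnegg : ∑ i, (fun k => -v k) i * g i ≤ 0 := by
        simp only [neg_mul]
        rw [Finset.sum_neg_distrib, hvg]
        simp
      have h2 := stepB (fun k => -v k) hneg0 hnegg
      simp only [neg_mul] at h2
      rw [Finset.sum_neg_distrib] at h2
      linarith
    -- Step D: affine relation f i - f j = τ (g i - g j)
    set τ : ℝ := (f a - f b) / (g a - g b) with hτdef
    have haff : ∀ i j, f i - f j = τ * (g i - g j) := by
      intro i j
      set v : Fin n → ℝ :=
        fun k => (g a - g b) * D i j k + (-(g i - g j)) * D a b k with hv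
      have h1 : ∑ k, v k = 0 := by
        rw [hv, hlin0, hpair0, hpair0]; ring
      have h2 : ∑ k, v k * g k = 0 := by
        rw [hv, hlin, hpair, hpair]; ring
      have h3 := stepC v h1 h2
      rw [hv, hlin, hpair, hpair] at h3
      have h4 : (g a - g b) * (f i - f j) = (g i - g j) * (f a - f b) := by linarith
      rw [hτdef]
      field_simp
      linarith
    have hτ0 : 0 ≤ τ := div_nonneg (by linarith) hgd.le
    have hτne : τ ≠ 0 := by
      intro h0
      apply hnc
      refine ⟨f a, fun i => ?_⟩
      have := haff i a
      rw [h0, zero_mul] at this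
      linarith
    have hτpos : 0 < τ := lt_of_le_of_ne hτ0 (Ne.symm hτne)
    -- define s and conclude the exponential form
    set s : ℝ := f a - τ * ℓ a with hsdef
    have hfi : ∀ i, f i - s = τ * ℓ i := by
      intro i
      have := haff i a
      simp only [hg] at this
      rw [hsdef]
      linarith [this]
    refine ⟨τ, s, hτpos, fun i => ?_, ?_⟩
    · have h1 : (f i - s) / τ = ℓ i := by
        rw [hfi i, mul_comm, mul_div_assoc, div_self hτne, mul_one]
      rw [h1]
      have h2 : Real.exp (ℓ i) = ρstar i / ρn i := Real.exp_log (hratio_pos i)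
      rw [h2, eq_comm, mul_comm]
      exact div_mul_cancel₀ _ (hρ_ne i)
    · -- s ≥ ∑ ρn i * f i
      have hT : ∑ i, ρn i * ℓ i ≤ 0 := by
        have hle : ∑ i, ρn i * ℓ i ≤ ∑ i, (ρstar i - ρn i) := by
          apply Finset.sum_le_sum
          intro i _
          have h1 : ℓ i ≤ ρstar i / ρn i - 1 :=
            Real.log_le_sub_one_of_pos (hratio_pos i)
          have h2 : ρn i * ℓ i ≤ ρn i * (ρstar i / ρn i - 1) :=
            mul_le_mul_of_nonneg_left h1 (hρ_pos i).le
          have h3 : ρn i * (ρstar i / ρn i - 1) = ρstar i - ρn i := by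
            rw [mul_sub, mul_one, mul_comm (ρn i) (ρstar i / ρn i),
              div_mul_cancel₀ _ (hρ_ne i)]
          linarith
        rw [Finset.sum_sub_distrib, hsum, hρ_sum] at hle
        linarith
      have hsum_f : ∑ i, ρn i * f i = τ * (∑ i, ρn i * ℓ i) + s := by
        have hterm : ∀ i ∈ (univ : Finset (Fin n)), ρn i * f i = τ * (ρn i * ℓ i) + s * ρn i := by
          intro i _
          have h4 : f i = τ * ℓ i + s := by linarith [hfi i]
          rw [h4]; ring
        rw [Finset.sum_congr rfl hterm, Finset.sum_add_distrib, ← Finset.mul_sum,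
          ← Finset.mul_sum, hρ_sum, mul_one]
      rw [hsum_f]
      have h6 : τ * (∑ i, ρn i * ℓ i) ≤ τ * 0 := mul_le_mul_of_nonneg_left hT hτpos.le
      rw [mul_zero] at h6
      linarith
end

section
/- Let Λ = [0, Λ_max] with Λ_max > 0. There exists a unique pair (π*, λ*) ∈ Π × Λ such that L_β(π, λ*) ≤ L_β(π*, λ*) ≤ L_β(π*, λ) for all π ∈ Π and all λ ∈ Λ; that is, L_β has a saddle point on Π × Λ, and both its policy component π* (i.e. the conditional pmf π*(·|z) for every z ∈ Z) and its dual component λ* are unique. -/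
open Finset

/-- A routing policy: for each context `z`, a probability mass function on the
two actions `{0,1}` (encoded as `Bool`). -/
def IsPolicy {Z : Type*} (π : Z → Bool → ℝ) : Prop :=
  (∀ z a, 0 ≤ π z a) ∧ (∀ z, ∑ a, π z a = 1)

/-- Entropy of a pmf on `{0,1}`, with the convention `0 · log 0 = 0`. -/
noncomputable def entBool (p : Bool → ℝ) : ℝ := ∑ a, Real.negMulLog (p a)

/-- The regularized Lagrangian `L_β`. -/
noncomputable def Lbeta {Z : Type*} [Fintype Z] (ρ : Z → ℝ) (r c : Z → Bool → ℝ)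
    (w1 w2 : Z → ℝ) (β C : ℝ) (π : Z → Bool → ℝ) (lam : ℝ) : ℝ :=
  (∑ z, ρ z * ∑ a, π z a * (w1 z * r z a - lam * (w2 z * c z a)))
    + lam * C + β * ((∑ z, ρ z * entBool (π z)) + lam ^ 2 / 2)

namespace SaddleAux




/-- Termwise Gibbs inequality. -/
lemma gibbs_term {p q : ℝ} (hp : 0 ≤ p) (hq : 0 < q) :
    p * Real.log q + Real.negMulLog p ≤ q - p := by
  rcases eq_or_lt_of_le hp with h | h
  · simp [← h, Real.negMulLog]
    linarith
  · have h1 : Real.log (q / p) ≤ q / p - 1 := Real.log_le_sub_one_of_pos (div_pos hq h)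
    rw [Real.log_div (ne_of_gt hq) (ne_of_gt h)] at h1
    have h2 : p * (Real.log q - Real.log p) ≤ p * (q / p - 1) :=
      mul_le_mul_of_nonneg_left h1 hp
    rw [Real.negMulLog]
    have : p * (q / p - 1) = q - p := by field_simp
    nlinarith [this]

lemma gibbs_term_strict {p q : ℝ} (hp : 0 ≤ p) (hq : 0 < q) (hne : p ≠ q) :
    p * Real.log q + Real.negMulLog p < q - p := by
  rcases eq_or_lt_of_le hp with h | h
  · simp [← h, Real.negMulLog]
    linarith
  · have hne' : q / p ≠ 1 := by
      intro hh
      exact hne (by field_simp at hh; linarith)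
    have h1 : Real.log (q / p) < q / p - 1 :=
      Real.log_lt_sub_one_of_pos (div_pos hq h) hne'
    rw [Real.log_div (ne_of_gt hq) (ne_of_gt h)] at h1
    have h2 : p * (Real.log q - Real.log p) < p * (q / p - 1) :=
      (mul_lt_mul_iff_right₀ h).mpr h1
    rw [Real.negMulLog]
    have : p * (q / p - 1) = q - p := by field_simp
    nlinarith [this]


noncomputable def Sexp (β : ℝ) (g : Bool → ℝ) : ℝ :=
  Real.exp (g false / β) + Real.exp (g true / β)

lemma Sexp_pos (β : ℝ) (g : Bool → ℝ) : 0 < Sexp β g :=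
  add_pos (Real.exp_pos _) (Real.exp_pos _)

noncomputable def smax (β : ℝ) (g : Bool → ℝ) (a : Bool) : ℝ :=
  Real.exp (g a / β) / Sexp β g

lemma smax_pos (β : ℝ) (g : Bool → ℝ) (a : Bool) : 0 < smax β g a :=
  div_pos (Real.exp_pos _) (Sexp_pos β g)

lemma smax_sum (β : ℝ) (g : Bool → ℝ) : ∑ a, smax β g a = 1 := by
  rw [Fintype.sum_bool, smax, smax, ← add_div]
  rw [div_eq_one_iff_eq (ne_of_gt (Sexp_pos β g))]
  rw [Sexp]; ring

lemma log_smax {β : ℝ} (hβ : 0 < β) (g : Bool → ℝ) (a : Bool) :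
    Real.log (smax β g a) = g a / β - Real.log (Sexp β g) := by
  rw [smax, Real.log_div (Real.exp_ne_zero _) (ne_of_gt (Sexp_pos β g)), Real.log_exp]

lemma score_key {β : ℝ} (hβ : 0 < β) (g : Bool → ℝ) (p : Bool → ℝ) (a : Bool) :
    p a * g a + β * Real.negMulLog (p a)
      = β * (p a * Real.log (smax β g a) + Real.negMulLog (p a))
        + β * Real.log (Sexp β g) * p a := by
  rw [log_smax hβ]
  field_simp
  ring

lemma score_le {β : ℝ} (hβ : 0 < β) (g : Bool → ℝ) (p : Bool → ℝ)
    (hp0 : ∀ a, 0 ≤ p a) (hp1 : ∑ a, p a = 1) :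
    (∑ a, p a * g a) + β * entBool p ≤ β * Real.log (Sexp β g) := by
  have hterm : ∀ a, p a * g a + β * Real.negMulLog (p a)
      ≤ β * (smax β g a - p a) + β * Real.log (Sexp β g) * p a := by
    intro a
    rw [score_key hβ]
    have := gibbs_term (hp0 a) (smax_pos β g a)
    nlinarith
  have hsum : (∑ a, p a * g a) + β * entBool p
      = ∑ a, (p a * g a + β * Real.negMulLog (p a)) := by
    rw [entBool, Finset.sum_add_distrib, Finset.mul_sum]
  rw [hsum]
  calc ∑ a, (p a * g a + β * Real.negMulLog (p a))
      ≤ ∑ a, (β * (smax β g a - p a) + β * Real.log (Sexp β g) * p a) :=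
        Finset.sum_le_sum (fun a _ => hterm a)
    _ = β * ((∑ a, smax β g a) - ∑ a, p a) + β * Real.log (Sexp β g) * ∑ a, p a := by
        rw [Fintype.sum_bool, Fintype.sum_bool, Fintype.sum_bool]; ring
    _ = β * Real.log (Sexp β g) := by rw [smax_sum, hp1]; ring

lemma score_lt {β : ℝ} (hβ : 0 < β) (g : Bool → ℝ) (p : Bool → ℝ)
    (hp0 : ∀ a, 0 ≤ p a) (hp1 : ∑ a, p a = 1) {b : Bool} (hb : p b ≠ smax β g b) :
    (∑ a, p a * g a) + β * entBool p < β * Real.log (Sexp β g) := by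
  have hterm : ∀ a, p a * g a + β * Real.negMulLog (p a)
      ≤ β * (smax β g a - p a) + β * Real.log (Sexp β g) * p a := by
    intro a
    rw [score_key hβ]
    have := gibbs_term (hp0 a) (smax_pos β g a)
    nlinarith
  have htermb : p b * g b + β * Real.negMulLog (p b)
      < β * (smax β g b - p b) + β * Real.log (Sexp β g) * p b := by
    rw [score_key hβ]
    have := gibbs_term_strict (hp0 b) (smax_pos β g b) hb
    nlinarith
  have hsum : (∑ a, p a * g a) + β * entBool p
      = ∑ a, (p a * g a + β * Real.negMulLog (p a)) := by
    rw [entBool, Finset.sum_add_distrib, Finset.mul_sum]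
  rw [hsum]
  calc ∑ a, (p a * g a + β * Real.negMulLog (p a))
      < ∑ a, (β * (smax β g a - p a) + β * Real.log (Sexp β g) * p a) := by
        apply Finset.sum_lt_sum (fun a _ => hterm a)
        exact ⟨b, Finset.mem_univ b, htermb⟩
    _ = β * ((∑ a, smax β g a) - ∑ a, p a) + β * Real.log (Sexp β g) * ∑ a, p a := by
        rw [Fintype.sum_bool, Fintype.sum_bool, Fintype.sum_bool]; ring
    _ = β * Real.log (Sexp β g) := by rw [smax_sum, hp1]; ring

lemma smax_score {β : ℝ} (hβ : 0 < β) (g : Bool → ℝ) :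
    (∑ a, smax β g a * g a) + β * entBool (smax β g) = β * Real.log (Sexp β g) := by
  have hterm : ∀ a, smax β g a * g a + β * Real.negMulLog (smax β g a)
      = β * Real.log (Sexp β g) * smax β g a := by
    intro a
    rw [score_key hβ]
    have h0 : smax β g a * Real.log (smax β g a) + Real.negMulLog (smax β g a) = 0 := by
      rw [Real.negMulLog]; ring
    nlinarith
  have hsum : (∑ a, smax β g a * g a) + β * entBool (smax β g)
      = ∑ a, (smax β g a * g a + β * Real.negMulLog (smax β g a)) := by
    rw [entBool, Finset.sum_add_distrib, Finset.mul_sum]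
  rw [hsum]
  calc ∑ a, (smax β g a * g a + β * Real.negMulLog (smax β g a))
      = ∑ a, β * Real.log (Sexp β g) * smax β g a := by
        exact Finset.sum_congr rfl (fun a _ => hterm a)
    _ = β * Real.log (Sexp β g) * ∑ a, smax β g a := by rw [Finset.mul_sum]
    _ = β * Real.log (Sexp β g) := by rw [smax_sum]; ring



lemma Lbeta_eq {Z : Type*} [Fintype Z] (ρ : Z → ℝ) (r c : Z → Bool → ℝ)
    (w1 w2 : Z → ℝ) (β C : ℝ) (π : Z → Bool → ℝ) (lam : ℝ) :
    Lbeta ρ r c w1 w2 β C π lam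
      = (∑ z, ρ z * ((∑ a, π z a * (w1 z * r z a - lam * (w2 z * c z a)))
          + β * entBool (π z))) + lam * C + β * lam ^ 2 / 2 := by
  unfold Lbeta
  have h : ∀ z : Z, ρ z * ((∑ a, π z a * (w1 z * r z a - lam * (w2 z * c z a)))
      + β * entBool (π z))
      = ρ z * (∑ a, π z a * (w1 z * r z a - lam * (w2 z * c z a)))
        + β * (ρ z * entBool (π z)) := fun z => by ring
  rw [Finset.sum_congr rfl (fun z _ => h z), Finset.sum_add_distrib, ← Finset.mul_sum]
  ring

end SaddleAux

/-- `L_β` admits a saddle point on `Π × [0, Λ_max]`, and the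
saddle point is unique (both the policy component — i.e. the conditional pmf
`π*(·|z)` for every `z` — and the dual component `λ*`). -/
theorem saddle_point_exists_unique {Z : Type*} [Fintype Z] [Nonempty Z]
    (ρ : Z → ℝ) (hρ_pos : ∀ z, 0 < ρ z) (hρ_sum : ∑ z, ρ z = 1)
    (r c : Z → Bool → ℝ) (w1 w2 : Z → ℝ)
    (hw1 : ∀ z, 0 ≤ w1 z) (hw2 : ∀ z, 0 ≤ w2 z)
    (β : ℝ) (hβ : 0 < β) (C : ℝ) (Λmax : ℝ) (hΛmax : 0 < Λmax) :
    ∃! p : (Z → Bool → ℝ) × ℝ,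
      IsPolicy p.1 ∧ p.2 ∈ Set.Icc (0 : ℝ) Λmax ∧
      (∀ π : Z → Bool → ℝ, IsPolicy π →
        Lbeta ρ r c w1 w2 β C π p.2 ≤ Lbeta ρ r c w1 w2 β C p.1 p.2) ∧
      (∀ lam ∈ Set.Icc (0 : ℝ) Λmax,
        Lbeta ρ r c w1 w2 β C p.1 p.2 ≤ Lbeta ρ r c w1 w2 β C p.1 lam) := by
  classical
  open SaddleAux in
  -- abbreviations
  set gl : ℝ → Z → Bool → ℝ := fun lam z a => w1 z * r z a - lam * (w2 z * c z a) with hgl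
  set Q : ℝ → Z → Bool → ℝ := fun lam z => SaddleAux.smax β (gl lam z) with hQ
  set D : ℝ → ℝ := fun lam => ∑ z, ρ z * (w2 z * ∑ a, Q lam z a * c z a) with hD
  set F : ℝ → ℝ := fun lam => min Λmax (max 0 ((D lam - C) / β)) with hF
  -- continuity and fixed point
  have hQc : ∀ z a, Continuous (fun lam => Q lam z a) := by
    intro z a
    simp only [hQ, SaddleAux.smax, SaddleAux.Sexp, hgl]
    apply Continuous.div
    · fun_prop
    · fun_prop
    · intro x; positivity
  have hDc : Continuous D := by
    apply continuous_finset_sum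
    intro z _
    exact continuous_const.mul (continuous_const.mul
      (continuous_finset_sum _ fun a _ => (hQc z a).mul continuous_const))
  have hFc : Continuous F :=
    continuous_const.min (continuous_const.max ((hDc.sub continuous_const).div_const β))
  obtain ⟨lam0, hlam0mem, hfix⟩ : ∃ l ∈ Set.Icc (0:ℝ) Λmax, F l = l := by
    have hG : ContinuousOn (fun l => F l - l) (Set.Icc 0 Λmax) :=
      (hFc.sub continuous_id).continuousOn
    have h0 : 0 ≤ F 0 - 0 := by
      simp only [hF, sub_zero]
      exact le_min hΛmax.le (le_max_left _ _)
    have h1 : F Λmax - Λmax ≤ 0 := by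
      have := min_le_left Λmax (max 0 ((D Λmax - C) / β))
      simp only [hF]; linarith
    have := intermediate_value_Icc' hΛmax.le hG
    obtain ⟨l, hl, hl0⟩ := this ⟨h1, h0⟩
    exact ⟨l, hl, by linarith [sub_eq_zero.mp hl0]⟩
  set π0 : Z → Bool → ℝ := Q lam0 with hπ0
  have hπ0pol : IsPolicy π0 :=
    ⟨fun z a => (SaddleAux.smax_pos β (gl lam0 z) a).le, fun z => SaddleAux.smax_sum β (gl lam0 z)⟩
  -- maximality in π at lam0 (weak and strict)
  have hscore : ∀ (π : Z → Bool → ℝ), IsPolicy π → ∀ z,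
      (∑ a, π z a * gl lam0 z a) + β * entBool (π z)
        ≤ β * Real.log (SaddleAux.Sexp β (gl lam0 z)) :=
    fun π hπ z => SaddleAux.score_le hβ _ _ (fun a => hπ.1 z a) (hπ.2 z)
  have hπ0score : ∀ z, (∑ a, π0 z a * gl lam0 z a) + β * entBool (π0 z)
      = β * Real.log (SaddleAux.Sexp β (gl lam0 z)) :=
    fun z => SaddleAux.smax_score hβ (gl lam0 z)
  have hmax : ∀ (π : Z → Bool → ℝ), IsPolicy π →
      Lbeta ρ r c w1 w2 β C π lam0 ≤ Lbeta ρ r c w1 w2 β C π0 lam0 := by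
    intro π hπ
    rw [SaddleAux.Lbeta_eq, SaddleAux.Lbeta_eq]
    have : ∀ z : Z, ρ z * ((∑ a, π z a * gl lam0 z a) + β * entBool (π z))
        ≤ ρ z * ((∑ a, π0 z a * gl lam0 z a) + β * entBool (π0 z)) := by
      intro z
      apply mul_le_mul_of_nonneg_left _ (hρ_pos z).le
      rw [hπ0score z]
      exact hscore π hπ z
    have hsum := Finset.sum_le_sum (fun z (_ : z ∈ Finset.univ) => this z)
    simp only [hgl] at hsum ⊢
    linarith
  have hmax_strict : ∀ (π : Z → Bool → ℝ), IsPolicy π →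
      ∀ z0 b0, π z0 b0 ≠ π0 z0 b0 →
      Lbeta ρ r c w1 w2 β C π lam0 < Lbeta ρ r c w1 w2 β C π0 lam0 := by
    intro π hπ z0 b0 hne
    rw [SaddleAux.Lbeta_eq, SaddleAux.Lbeta_eq]
    have hle : ∀ z : Z, ρ z * ((∑ a, π z a * gl lam0 z a) + β * entBool (π z))
        ≤ ρ z * ((∑ a, π0 z a * gl lam0 z a) + β * entBool (π0 z)) := by
      intro z
      apply mul_le_mul_of_nonneg_left _ (hρ_pos z).le
      rw [hπ0score z]
      exact hscore π hπ z
    have hlt : ρ z0 * ((∑ a, π z0 a * gl lam0 z0 a) + β * entBool (π z0))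
        < ρ z0 * ((∑ a, π0 z0 a * gl lam0 z0 a) + β * entBool (π0 z0)) := by
      apply (mul_lt_mul_iff_right₀ (hρ_pos z0)).mpr
      rw [hπ0score z0]
      exact SaddleAux.score_lt hβ _ _ (fun a => hπ.1 z0 a) (hπ.2 z0) hne
    have hsum := Finset.sum_lt_sum (fun z (_ : z ∈ Finset.univ) => hle z)
      ⟨z0, Finset.mem_univ z0, hlt⟩
    simp only [hgl] at hsum ⊢
    linarith
  -- lam-dependence of Lbeta π0 ·
  have hLlam : ∀ lam : ℝ, Lbeta ρ r c w1 w2 β C π0 lam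
      = (∑ z, ρ z * ∑ a, π0 z a * (w1 z * r z a)) - lam * D lam0
        + lam * C + β * ((∑ z, ρ z * entBool (π0 z)) + lam ^ 2 / 2) := by
    intro lam
    unfold Lbeta
    have hsplit : (∑ z, ρ z * ∑ a, π0 z a * (w1 z * r z a - lam * (w2 z * c z a)))
        = (∑ z, ρ z * ∑ a, π0 z a * (w1 z * r z a)) - lam * D lam0 := by
      simp only [hD, Finset.mul_sum, ← Finset.sum_sub_distrib]
      apply Finset.sum_congr rfl
      intro z _
      simp only [Fintype.sum_bool, ← hπ0]
      ring
    rw [hsplit]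
  -- minimality in lam (with quadratic margin)
  have hmin : ∀ lam ∈ Set.Icc (0:ℝ) Λmax,
      Lbeta ρ r c w1 w2 β C π0 lam0 + β * (lam - lam0) ^ 2 / 2
        ≤ Lbeta ρ r c w1 w2 β C π0 lam := by
    intro lam hlam
    obtain ⟨hlam1, hlam2⟩ := hlam
    rw [hLlam lam, hLlam lam0]
    have key : 0 ≤ (lam - lam0) * ((C - D lam0) + β * lam0) := by
      set m : ℝ := (D lam0 - C) / β with hm
      have hbm : C - D lam0 = -(β * m) := by
        simp only [hm]; field_simp; ring
      have hfix' : min Λmax (max 0 m) = lam0 := hfix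
      rcases le_or_gt m 0 with hm0 | hm0
      · have hl0 : lam0 = 0 := by
          rw [← hfix', max_eq_left hm0, min_eq_right hΛmax.le]
        have h1 : 0 ≤ C - D lam0 + β * lam0 := by rw [hbm, hl0]; nlinarith
        have h2 : 0 ≤ lam - lam0 := by rw [hl0]; linarith
        exact mul_nonneg h2 h1
      · rcases le_or_gt m Λmax with hmΛ | hmΛ
        · have hl0 : lam0 = m := by
            rw [← hfix', max_eq_right hm0.le, min_eq_right hmΛ]
          have h1 : C - D lam0 + β * lam0 = 0 := by rw [hbm, hl0]; ring
          rw [h1, mul_zero]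
        · have hl0 : lam0 = Λmax := by
            rw [← hfix', max_eq_right hm0.le, min_eq_left hmΛ.le]
          have h1 : C - D lam0 + β * lam0 ≤ 0 := by rw [hbm, hl0]; nlinarith
          have h2 : lam - lam0 ≤ 0 := by rw [hl0]; linarith
          nlinarith [mul_nonneg (neg_nonneg.mpr h2) (neg_nonneg.mpr h1)]
    nlinarith [key]
  have hmin' : ∀ lam ∈ Set.Icc (0:ℝ) Λmax,
      Lbeta ρ r c w1 w2 β C π0 lam0 ≤ Lbeta ρ r c w1 w2 β C π0 lam := by
    intro lam hlam
    have := hmin lam hlam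
    nlinarith [sq_nonneg (lam - lam0)]
  -- assemble
  refine ⟨⟨π0, lam0⟩, ⟨hπ0pol, hlam0mem, hmax, hmin'⟩, ?_⟩
  rintro ⟨π2, lam2⟩ ⟨hpol2, hmem2, hmax2, hmin2⟩
  have e1 : Lbeta ρ r c w1 w2 β C π2 lam0 ≤ Lbeta ρ r c w1 w2 β C π0 lam0 := hmax π2 hpol2
  have e2 : Lbeta ρ r c w1 w2 β C π0 lam0 ≤ Lbeta ρ r c w1 w2 β C π0 lam2 := hmin' lam2 hmem2
  have e3 : Lbeta ρ r c w1 w2 β C π0 lam2 ≤ Lbeta ρ r c w1 w2 β C π2 lam2 := hmax2 π0 hπ0pol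
  have e4 : Lbeta ρ r c w1 w2 β C π2 lam2 ≤ Lbeta ρ r c w1 w2 β C π2 lam0 := hmin2 lam0 hlam0mem
  have hall : Lbeta ρ r c w1 w2 β C π2 lam0 = Lbeta ρ r c w1 w2 β C π0 lam0 := by linarith
  have hall2 : Lbeta ρ r c w1 w2 β C π0 lam2 = Lbeta ρ r c w1 w2 β C π0 lam0 := by linarith
  have hπeq : π2 = π0 := by
    funext z a
    by_contra hne
    exact absurd hall (ne_of_lt (hmax_strict π2 hpol2 z a hne))
  have hlameq : lam2 = lam0 := by
    have := hmin lam2 hmem2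
    rw [hall2] at this
    have h2 : (lam2 - lam0) ^ 2 ≤ 0 := by nlinarith
    have := sq_nonneg (lam2 - lam0)
    have : (lam2 - lam0) ^ 2 = 0 := le_antisymm h2 (sq_nonneg _)
    nlinarith [pow_eq_zero_iff (n := 2) (by norm_num) |>.mp this]
  simp [hπeq, hlameq]
end

section
/- Suppose 0 ≤ c(z,a) ≤ M and 0 ≤ w2(z) ≤ K for all z ∈ Z, a ∈ {0,1}, with M, K > 0. Then for every z ∈ Z and all λ₁, λ₂ ∈ ℝ, KL( π_{λ₁}(·|z) ‖ π_{λ₂}(·|z) ) ≤ (M²K²/(2β²)) · (λ₁ − λ₂)²; consequently ∑_z ρ(z) · KL( π_{λ₁}(·|z) ‖ π_{λ₂}(·|z) ) ≤ (M²K²/(2β²)) · (λ₁ − λ₂)². -/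
open Finset

/-- `q_λ(z,a) = w1(z) r(z,a) − λ w2(z) c(z,a)`. -/
noncomputable def qfun {Z : Type*} (r c : Z → Bool → ℝ) (w1 w2 : Z → ℝ)
    (lam : ℝ) (z : Z) (a : Bool) : ℝ :=
  w1 z * r z a - lam * (w2 z * c z a)

/-- Partition function `Q(z,λ) = ∑_a exp(q_λ(z,a)/β)`. -/
noncomputable def Qpart {Z : Type*} (r c : Z → Bool → ℝ) (w1 w2 : Z → ℝ)
    (β lam : ℝ) (z : Z) : ℝ :=
  ∑ a, Real.exp (qfun r c w1 w2 lam z a / β)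

/-- Gibbs policy `π_λ(a|z) = exp(q_λ(z,a)/β) / Q(z,λ)`. -/
noncomputable def gibbs {Z : Type*} (r c : Z → Bool → ℝ) (w1 w2 : Z → ℝ)
    (β lam : ℝ) (z : Z) (a : Bool) : ℝ :=
  Real.exp (qfun r c w1 w2 lam z a / β) / Qpart r c w1 w2 β lam z

/-- KL divergence between two pmfs on `{0,1}` (with positive second argument):
`KL(p‖q) = ∑_a p(a) log(p(a)/q(a))`. -/
noncomputable def klBool (p q : Bool → ℝ) : ℝ :=
  ∑ a, p a * Real.log (p a / q a)

lemma aux_sinh_le (s : ℝ) (hs : 0 ≤ s) :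
    Real.exp s - Real.exp (-s) ≤ s * (Real.exp s + Real.exp (-s)) := by
  set f : ℝ → ℝ := fun t => t * (Real.exp t + Real.exp (-t)) - (Real.exp t - Real.exp (-t)) with hf
  have hd : ∀ t : ℝ, HasDerivAt f (t * (Real.exp t - Real.exp (-t))) t := by
    intro t
    have he : HasDerivAt (fun t : ℝ => Real.exp (-t)) (-Real.exp (-t)) t := by
      simpa using (hasDerivAt_neg t).exp
    have h1 : HasDerivAt (fun t : ℝ => t * (Real.exp t + Real.exp (-t)))
        (1 * (Real.exp t + Real.exp (-t)) + t * (Real.exp t + -Real.exp (-t))) t :=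
      (hasDerivAt_id t).mul ((Real.hasDerivAt_exp t).add he)
    have h2 : HasDerivAt (fun t : ℝ => Real.exp t - Real.exp (-t))
        (Real.exp t - -Real.exp (-t)) t := (Real.hasDerivAt_exp t).sub he
    have : HasDerivAt f (1 * (Real.exp t + Real.exp (-t)) + t * (Real.exp t + -Real.exp (-t))
        - (Real.exp t - -Real.exp (-t))) t := h1.sub h2
    convert this using 1
    ring
  have hmono : MonotoneOn f (Set.Ici (0:ℝ)) := by
    apply monotoneOn_of_deriv_nonneg (convex_Ici 0)
    · exact (Continuous.sub (continuous_id.mul ((Real.continuous_exp).add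
        (Real.continuous_exp.comp continuous_neg)))
        (Real.continuous_exp.sub (Real.continuous_exp.comp continuous_neg))).continuousOn
    · intro t ht
      exact (hd t).differentiableAt.differentiableWithinAt
    · intro t ht
      rw [(hd t).deriv]
      have ht' : 0 < t := by simpa [interior_Ici] using ht
      have : Real.exp (-t) ≤ Real.exp t := Real.exp_le_exp.2 (by linarith)
      nlinarith
  have h0 : f 0 ≤ f s := hmono (Set.self_mem_Ici) hs hs
  simp only [hf] at h0
  norm_num at h0
  linarith

lemma aux_sig_lip (u v : ℝ) (h : v ≤ u) :
    Real.exp u / (Real.exp u + 1) - Real.exp v / (Real.exp v + 1) ≤ (u - v) / 2 := by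
  set s := (u - v) / 2 with hsdef
  have hs : 0 ≤ s := by simp [hsdef]; linarith
  have hA := aux_sinh_le s hs
  have hEu : 0 < Real.exp u := Real.exp_pos u
  have hEv : 0 < Real.exp v := Real.exp_pos v
  have hm : Real.exp u = Real.exp ((u+v)/2) * Real.exp s := by
    rw [← Real.exp_add, hsdef]; ring_nf
  have hm2 : Real.exp v = Real.exp ((u+v)/2) * Real.exp (-s) := by
    rw [← Real.exp_add, hsdef]; ring_nf
  have hM : 0 < Real.exp ((u+v)/2) := Real.exp_pos _
  have key : Real.exp u - Real.exp v ≤ s * (Real.exp u + Real.exp v) := by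
    rw [hm, hm2]; nlinarith
  have hden : 0 < (Real.exp u + 1) * (Real.exp v + 1) := by positivity
  rw [div_sub_div _ _ (by positivity) (by positivity), div_le_iff₀ hden]
  nlinarith [mul_nonneg hs (by positivity : (0:ℝ) ≤ Real.exp u * Real.exp v + 1)]

lemma aux_sig_prod (u v : ℝ) :
    (Real.exp u / (Real.exp u + 1) - Real.exp v / (Real.exp v + 1)) * (u - v)
      ≤ (u - v) ^ 2 / 2 := by
  rcases le_total v u with h | h
  · have := aux_sig_lip u v h; nlinarith
  · have := aux_sig_lip v u h; nlinarith

lemma aux_kl_two (xf xt yf yt : ℝ) :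
    klBool (fun a => Real.exp (cond a xt xf) / (Real.exp xt + Real.exp xf))
           (fun a => Real.exp (cond a yt yf) / (Real.exp yt + Real.exp yf))
      ≤ ((xt - xf) - (yt - yf)) ^ 2 / 2 := by
  have hSx : 0 < Real.exp xt + Real.exp xf := by positivity
  have hSy : 0 < Real.exp yt + Real.exp yf := by positivity
  set pt := Real.exp xt / (Real.exp xt + Real.exp xf) with hptd
  set pf := Real.exp xf / (Real.exp xt + Real.exp xf) with hpfd
  set qt := Real.exp yt / (Real.exp yt + Real.exp yf) with hqtd
  set qf := Real.exp yf / (Real.exp yt + Real.exp yf) with hqfd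
  have hpt : 0 < pt := by positivity
  have hpf : 0 < pf := by positivity
  have hqt : 0 < qt := by positivity
  have hqf : 0 < qf := by positivity
  have hpsum : pt + pf = 1 := by
    rw [hptd, hpfd, ← add_div, div_self hSx.ne']
  have hqsum : qt + qf = 1 := by
    rw [hqtd, hqfd, ← add_div, div_self hSy.ne']
  have hkl : klBool (fun a => Real.exp (cond a xt xf) / (Real.exp xt + Real.exp xf))
           (fun a => Real.exp (cond a yt yf) / (Real.exp yt + Real.exp yf))
      = pt * Real.log (pt / qt) + pf * Real.log (pf / qf) := by
    rw [klBool, Fintype.sum_bool]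
    simp only [cond_true, cond_false]
    rfl
  rw [hkl]
  have h1 : Real.log (pt / qt) ≤ pt / qt - 1 :=
    Real.log_le_sub_one_of_pos (by positivity)
  have h2 : Real.log (pf / qf) ≤ pf / qf - 1 :=
    Real.log_le_sub_one_of_pos (by positivity)
  have b1 : qt * Real.log (pt / qt) ≤ pt - qt := by
    have h' := mul_le_mul_of_nonneg_left h1 hqt.le
    have e : qt * (pt / qt - 1) = pt - qt := by field_simp
    rw [e] at h'
    exact h'
  have b2 : qf * Real.log (pf / qf) ≤ pf - qf := by
    have h' := mul_le_mul_of_nonneg_left h2 hqf.le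
    have e : qf * (pf / qf - 1) = pf - qf := by field_simp
    rw [e] at h'
    exact h'
  have hrev : 0 ≤ -(qt * Real.log (pt / qt)) - qf * Real.log (pf / qf) := by
    linarith
  have hstep : pt * Real.log (pt / qt) + pf * Real.log (pf / qf)
      ≤ (pt - qt) * (Real.log (pt / qt) - Real.log (pf / qf)) := by
    have hpf' : pf = 1 - pt := by linarith
    have hqf' : qf = 1 - qt := by linarith
    have key : (pt - qt) * (Real.log (pt / qt) - Real.log (pf / qf))
        - (pt * Real.log (pt / qt) + pf * Real.log (pf / qf))
        = -(qt * Real.log (pt / qt)) - qf * Real.log (pf / qf) := by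
      rw [hpf', hqf']; ring
    linarith
  have hLt : Real.log (pt / qt) - Real.log (pf / qf) = (xt - xf) - (yt - yf) := by
    have ept : Real.log pt = xt - Real.log (Real.exp xt + Real.exp xf) := by
      rw [hptd, Real.log_div (by positivity) hSx.ne', Real.log_exp]
    have epf : Real.log pf = xf - Real.log (Real.exp xt + Real.exp xf) := by
      rw [hpfd, Real.log_div (by positivity) hSx.ne', Real.log_exp]
    have eqt : Real.log qt = yt - Real.log (Real.exp yt + Real.exp yf) := by
      rw [hqtd, Real.log_div (by positivity) hSy.ne', Real.log_exp]
    have eqf : Real.log qf = yf - Real.log (Real.exp yt + Real.exp yf) := by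
      rw [hqfd, Real.log_div (by positivity) hSy.ne', Real.log_exp]
    rw [Real.log_div hpt.ne' hqt.ne', Real.log_div hpf.ne' hqf.ne',
        ept, epf, eqt, eqf]
    ring
  have hptσ : pt = Real.exp (xt - xf) / (Real.exp (xt - xf) + 1) := by
    rw [hptd, Real.exp_sub]
    have hf : 0 < Real.exp xf := Real.exp_pos xf
    field_simp
  have hqtσ : qt = Real.exp (yt - yf) / (Real.exp (yt - yf) + 1) := by
    rw [hqtd, Real.exp_sub]
    have hf : 0 < Real.exp yf := Real.exp_pos yf
    field_simp
  calc pt * Real.log (pt / qt) + pf * Real.log (pf / qf)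
      ≤ (pt - qt) * (Real.log (pt / qt) - Real.log (pf / qf)) := hstep
    _ = (Real.exp (xt - xf) / (Real.exp (xt - xf) + 1)
          - Real.exp (yt - yf) / (Real.exp (yt - yf) + 1))
          * ((xt - xf) - (yt - yf)) := by rw [hLt, hptσ, hqtσ]
    _ ≤ ((xt - xf) - (yt - yf)) ^ 2 / 2 := aux_sig_prod _ _

/-- under the bounds `0 ≤ c ≤ M` and `0 ≤ w2 ≤ K`, the KL
divergence between Gibbs conditionals at `λ₁` and `λ₂` is at most
`(M²K²/(2β²))(λ₁ − λ₂)²`, pointwise in `z` and hence also averaged over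
`ρ`. -/
theorem kl_gibbs_bound {Z : Type*} [Fintype Z] [Nonempty Z]
    (ρ : Z → ℝ) (hρ_pos : ∀ z, 0 < ρ z) (hρ_sum : ∑ z, ρ z = 1)
    (r c : Z → Bool → ℝ) (w1 w2 : Z → ℝ)
    (hw1 : ∀ z, 0 ≤ w1 z) (hw2 : ∀ z, 0 ≤ w2 z)
    (β : ℝ) (hβ : 0 < β)
    (M K : ℝ) (hM : 0 < M) (hK : 0 < K)
    (hc_bound : ∀ z a, 0 ≤ c z a ∧ c z a ≤ M)
    (hw2_bound : ∀ z, w2 z ≤ K) :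
    (∀ (z : Z) (lam₁ lam₂ : ℝ),
      klBool (gibbs r c w1 w2 β lam₁ z) (gibbs r c w1 w2 β lam₂ z)
        ≤ M ^ 2 * K ^ 2 / (2 * β ^ 2) * (lam₁ - lam₂) ^ 2) ∧
    (∀ lam₁ lam₂ : ℝ,
      ∑ z, ρ z * klBool (gibbs r c w1 w2 β lam₁ z) (gibbs r c w1 w2 β lam₂ z)
        ≤ M ^ 2 * K ^ 2 / (2 * β ^ 2) * (lam₁ - lam₂) ^ 2) := by
  have hpoint : ∀ (z : Z) (lam₁ lam₂ : ℝ),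
      klBool (gibbs r c w1 w2 β lam₁ z) (gibbs r c w1 w2 β lam₂ z)
        ≤ M ^ 2 * K ^ 2 / (2 * β ^ 2) * (lam₁ - lam₂) ^ 2 := by
    intro z lam₁ lam₂
    set xf := qfun r c w1 w2 lam₁ z false / β with hxf
    set xt := qfun r c w1 w2 lam₁ z true / β with hxt
    set yf := qfun r c w1 w2 lam₂ z false / β with hyf
    set yt := qfun r c w1 w2 lam₂ z true / β with hyt
    have hg1 : gibbs r c w1 w2 β lam₁ z
        = fun a => Real.exp (cond a xt xf) / (Real.exp xt + Real.exp xf) := by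
      funext a
      cases a <;> simp [gibbs, Qpart, Fintype.sum_bool, hxt, hxf]
    have hg2 : gibbs r c w1 w2 β lam₂ z
        = fun a => Real.exp (cond a yt yf) / (Real.exp yt + Real.exp yf) := by
      funext a
      cases a <;> simp [gibbs, Qpart, Fintype.sum_bool, hyt, hyf]
    rw [hg1, hg2]
    refine (aux_kl_two xf xt yf yt).trans ?_
    have hdiff : (xt - xf) - (yt - yf)
        = (lam₂ - lam₁) * (w2 z * (c z true - c z false)) / β := by
      rw [hxt, hxf, hyt, hyf]
      simp only [qfun]
      field_simp
      ring
    rw [hdiff]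
    have hc1 := hc_bound z true
    have hc0 := hc_bound z false
    have hcd : (c z true - c z false) ^ 2 ≤ M ^ 2 :=
      sq_le_sq' (by linarith [hc1.1, hc0.2]) (by linarith [hc1.2, hc0.1])
    have hwd : (w2 z) ^ 2 ≤ K ^ 2 := pow_le_pow_left₀ (hw2 z) (hw2_bound z) 2
    have hnum : ((lam₂ - lam₁) * (w2 z * (c z true - c z false))) ^ 2
        ≤ (lam₁ - lam₂) ^ 2 * (K ^ 2 * M ^ 2) := by
      have hmm : (w2 z) ^ 2 * (c z true - c z false) ^ 2 ≤ K ^ 2 * M ^ 2 :=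
        mul_le_mul hwd hcd (sq_nonneg _) (by positivity)
      calc ((lam₂ - lam₁) * (w2 z * (c z true - c z false))) ^ 2
          = (lam₁ - lam₂) ^ 2 * ((w2 z) ^ 2 * (c z true - c z false) ^ 2) := by ring
        _ ≤ (lam₁ - lam₂) ^ 2 * (K ^ 2 * M ^ 2) :=
            mul_le_mul_of_nonneg_left hmm (sq_nonneg _)
    have heq : ((lam₂ - lam₁) * (w2 z * (c z true - c z false)) / β) ^ 2 / 2
        = ((lam₂ - lam₁) * (w2 z * (c z true - c z false))) ^ 2 / (2 * β ^ 2) := by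
      rw [div_pow]
      ring
    have heq2 : M ^ 2 * K ^ 2 / (2 * β ^ 2) * (lam₁ - lam₂) ^ 2
        = (lam₁ - lam₂) ^ 2 * (K ^ 2 * M ^ 2) / (2 * β ^ 2) := by ring
    rw [heq, heq2]
    gcongr
  refine ⟨hpoint, fun lam₁ lam₂ => ?_⟩
  calc ∑ z, ρ z * klBool (gibbs r c w1 w2 β lam₁ z) (gibbs r c w1 w2 β lam₂ z)
      ≤ ∑ z, ρ z * (M ^ 2 * K ^ 2 / (2 * β ^ 2) * (lam₁ - lam₂) ^ 2) := by
        apply Finset.sum_le_sum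
        intro z _
        exact mul_le_mul_of_nonneg_left (hpoint z lam₁ lam₂) (hρ_pos z).le
    _ = M ^ 2 * K ^ 2 / (2 * β ^ 2) * (lam₁ - lam₂) ^ 2 := by
        rw [← Finset.sum_mul, hρ_sum, one_mul]
end
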